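/- Let Y be a real Banach space such that every closed subspace of Y has property U in Y. Then the dual norm on Y* is strictly convex. -/

import Mathlib

/-- (Converse Taylor–Foguel) If every closed subspace of a real Banach space `Y` has
property U in `Y`, then the dual norm on `Y*` is strictly convex. -/
theorem strictConvex_dual_of_propertyU (Y : Type*) [NormedAddCommGroup Y] [NormedSpace ℝ Y]
    [CompleteSpace Y]
    (hU : ∀ X : Subspace ℝ Y, IsClosed (X : Set Y) →
      ∀ f : X →L[ℝ] ℝ, ∃! g : Y →L[ℝ] ℝ, (∀ x : X, g x = f x) ∧ ‖g‖ = ‖f‖) :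
    ∀ g₁ g₂ : Y →L[ℝ] ℝ, ‖g₁‖ = 1 → ‖g₂‖ = 1 → ‖(1 / 2 : ℝ) • (g₁ + g₂)‖ = 1 → g₁ = g₂ := by
  intro g₁ g₂ h₁ h₂ hmid
  by_contra hne
  set φ : Y →L[ℝ] ℝ := g₁ - g₂ with hφ
  have hφne : φ ≠ 0 := sub_ne_zero.mpr hne
  obtain ⟨w, hw⟩ : ∃ w, φ w ≠ 0 := by
    by_contra h
    push_neg at h
    exact hφne (ContinuousLinearMap.ext fun x => by simp [h x])
  set z : Y := (φ w)⁻¹ • w with hzdef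
  have hφz : φ z = 1 := by
    simp [hzdef, map_smul, inv_mul_cancel₀ hw]
  set X : Subspace ℝ Y := LinearMap.ker (φ : Y →ₗ[ℝ] ℝ) with hXdef
  have hXc : IsClosed (X : Set Y) := ContinuousLinearMap.isClosed_ker φ
  set f : X →L[ℝ] ℝ := g₁.comp X.subtypeL with hfdef
  have hf1 : ∀ x : X, f x = g₁ (x : Y) := fun x => rfl
  have hagree : ∀ x : X, g₂ (x : Y) = g₁ (x : Y) := by
    intro x
    have hx : φ (x : Y) = 0 := x.2
    simp only [hφ, ContinuousLinearMap.sub_apply] at hx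
    linarith
  have hsum : ‖g₁ + g₂‖ = 2 := by
    have h : (1 / 2 : ℝ) * ‖g₁ + g₂‖ = 1 := by
      rw [← Real.norm_of_nonneg (by norm_num : (0:ℝ) ≤ 1/2), ← norm_smul]
      exact hmid
    linarith
  have hfle : ‖f‖ ≤ 1 := by
    refine ContinuousLinearMap.opNorm_le_bound _ zero_le_one ?_
    intro x
    calc ‖f x‖ = ‖g₁ (x : Y)‖ := rfl
      _ ≤ ‖g₁‖ * ‖(x : Y)‖ := g₁.le_opNorm _
      _ = 1 * ‖x‖ := by rw [h₁]; rfl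
  -- key estimate: for every ε > 0, 1 ≤ ‖f‖ + ε * (1 + 2 * ‖z‖)
  have key : ∀ ε : ℝ, 0 < ε → 1 ≤ ‖f‖ + ε * (1 + 2 * ‖z‖) := by
    intro ε hε
    have hlt : 2 - ε < ‖g₁ + g₂‖ := by rw [hsum]; linarith
    obtain ⟨y₀, hy₀, hy₀v⟩ := (g₁ + g₂).exists_lt_apply_of_lt_opNorm hlt
    have habs : 2 - ε < |g₁ y₀ + g₂ y₀| := by
      have : (g₁ + g₂) y₀ = g₁ y₀ + g₂ y₀ := rfl
      rw [Real.norm_eq_abs, this] at hy₀v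
      exact hy₀v
    obtain ⟨y, hy, hyv⟩ : ∃ y : Y, ‖y‖ ≤ 1 ∧ 2 - ε < g₁ y + g₂ y := by
      rcases le_or_gt 0 (g₁ y₀ + g₂ y₀) with h | h
      · rw [abs_of_nonneg h] at habs
        exact ⟨y₀, hy₀.le, habs⟩
      · rw [abs_of_neg h] at habs
        refine ⟨-y₀, by simpa using hy₀.le, ?_⟩
        have : g₁ (-y₀) + g₂ (-y₀) = -(g₁ y₀ + g₂ y₀) := by simp; ring
        linarith [this]
    have hy1 : g₁ y ≤ 1 := by
      have := g₁.le_opNorm y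
      rw [h₁, one_mul, Real.norm_eq_abs] at this
      calc g₁ y ≤ |g₁ y| := le_abs_self _
        _ ≤ 1 := this.trans hy
    have hy2 : g₂ y ≤ 1 := by
      have := g₂.le_opNorm y
      rw [h₂, one_mul, Real.norm_eq_abs] at this
      calc g₂ y ≤ |g₂ y| := le_abs_self _
        _ ≤ 1 := this.trans hy
    have hφy : |φ y| ≤ ε := by
      have hφy' : φ y = g₁ y - g₂ y := by simp [hφ]
      rw [hφy', abs_le]
      constructor <;> linarith
    set x : Y := y - φ y • z with hxdef
    have hxX : x ∈ X := by
      simp [hXdef, hxdef, map_sub, map_smul, hφz]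
    have hxnorm : ‖x‖ ≤ 1 + ε * ‖z‖ := by
      have h1 : ‖φ y • z‖ ≤ ε * ‖z‖ := by
        rw [norm_smul, Real.norm_eq_abs]
        exact mul_le_mul_of_nonneg_right hφy (norm_nonneg z)
      calc ‖x‖ ≤ ‖y‖ + ‖φ y • z‖ := norm_sub_le _ _
        _ ≤ 1 + ε * ‖z‖ := add_le_add hy h1
    have hg1z : |g₁ z| ≤ ‖z‖ := by
      have := g₁.le_opNorm z
      rwa [h₁, one_mul, Real.norm_eq_abs] at this
    have hfx : 1 - ε - ε * ‖z‖ < g₁ x := by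
      have habs2 : |φ y * g₁ z| ≤ ε * ‖z‖ := by
        rw [abs_mul]
        exact mul_le_mul hφy hg1z (abs_nonneg _) hε.le
      have h' : φ y * g₁ z ≤ ε * ‖z‖ := (le_abs_self _).trans habs2
      have hxval : g₁ x = g₁ y - φ y * g₁ z := by
        simp [hxdef, map_sub, map_smul]
      linarith
    have hfxle : g₁ x ≤ ‖f‖ * (1 + ε * ‖z‖) := by
      have h1 : ‖f ⟨x, hxX⟩‖ ≤ ‖f‖ * ‖x‖ := f.le_opNorm _
      have h2 : g₁ x = f ⟨x, hxX⟩ := rfl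
      have h3 : f ⟨x, hxX⟩ ≤ ‖f ⟨x, hxX⟩‖ := Real.le_norm_self _
      have h4 : ‖f‖ * ‖x‖ ≤ ‖f‖ * (1 + ε * ‖z‖) :=
        mul_le_mul_of_nonneg_left hxnorm (norm_nonneg f)
      linarith
    have h5 : ‖f‖ * (ε * ‖z‖) ≤ 1 * (ε * ‖z‖) :=
      mul_le_mul_of_nonneg_right hfle (mul_nonneg hε.le (norm_nonneg z))
    linarith [hfx, hfxle, h5]
  have hfeq : ‖f‖ = 1 := by
    refine le_antisymm hfle (le_of_forall_pos_le_add ?_)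
    intro δ hδ
    have hC : (0:ℝ) < 1 + 2 * ‖z‖ := by positivity
    have hk := key (δ / (1 + 2 * ‖z‖)) (div_pos hδ hC)
    rw [div_mul_cancel₀ _ hC.ne'] at hk
    linarith
  obtain ⟨g, -, hguniq⟩ := hU X hXc f
  have e₁ : g₁ = g := hguniq g₁ ⟨fun x => (hf1 x).symm, by rw [h₁, hfeq]⟩
  have e₂ : g₂ = g := hguniq g₂ ⟨fun x => by rw [hagree x, hf1 x], by rw [h₂, hfeq]⟩
  exact hne (e₁.trans e₂.symm)
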